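/- For every k ≥ 0 the alternating minimization iterates satisfy the descent properties H^k − H^{k+1/2} ≥ (1/(2L₁R²)) (H^k − H*)² and H^{k+1/2} − H^{k+1} ≥ (1/(2L₂R²)) (H^{k+1/2} − H*)², where H^{k+1/2} = H(x₁^{k+1}, x₂^k). -/

import Mathlib

open Set
open RealInnerProductSpace


lemma aux_convex_lb {E : Type*} [NormedAddCommGroup E] [NormedSpace ℝ E]
    (g : E → ℝ) (hconv : ConvexOn ℝ Set.univ g) (x : E) {A : E →L[ℝ] ℝ}
    (hA : HasFDerivAt g A x) (y : E) : g x + A (y - x) ≤ g y := by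
  set ψ : ℝ → ℝ := fun t => g (x + t • (y - x)) with hψdef
  have hγ : ∀ t : ℝ, HasDerivAt (fun t : ℝ => x + t • (y - x)) (y - x) t := by
    intro t
    simpa using ((hasDerivAt_id t).smul_const (y - x)).const_add x
  have hψconv : ConvexOn ℝ Set.univ ψ := by
    have h := hconv.comp_affineMap (AffineMap.lineMap x y : ℝ →ᵃ[ℝ] E)
    have he : (g ∘ (AffineMap.lineMap x y : ℝ →ᵃ[ℝ] E)) = ψ := by
      funext t
      simp [ψ, Function.comp, AffineMap.lineMap_apply, add_comm]
    rw [he] at h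
    simpa using h
  have hA0 : HasFDerivAt g A (x + (0:ℝ) • (y - x)) := by simpa using hA
  have hder : HasDerivAt ψ (A (y - x)) 0 := hA0.comp_hasDerivAt 0 (hγ 0)
  have hsl := hψconv.le_slope_of_hasDerivAt (Set.mem_univ 0) (Set.mem_univ 1) zero_lt_one hder
  have hs : slope ψ 0 1 = g y - g x := by
    simp [slope_def_field, ψ]
  rw [hs] at hsl
  linarith

/-- Descent lemma: quadratic upper bound for a function with Lipschitz derivative. -/
lemma aux_descent {E : Type*} [NormedAddCommGroup E] [NormedSpace ℝ E]
    (g : E → ℝ) (g' : E → E →L[ℝ] ℝ) (hg : ∀ z, HasFDerivAt g (g' z) z)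
    (hcont : Continuous g') (L : ℝ)
    (hlip : ∀ z w, ‖g' w - g' z‖ ≤ L * ‖w - z‖) (x y : E) :
    g y ≤ g x + g' x (y - x) + L / 2 * ‖y - x‖ ^ 2 := by
  set v := y - x with hv
  set ψ' : ℝ → ℝ := fun t => g' (x + t • v) v with hψ'
  have hγ : ∀ t : ℝ, HasDerivAt (fun t : ℝ => x + t • v) v t := by
    intro t; simpa using ((hasDerivAt_id t).smul_const v).const_add x
  have hder : ∀ t : ℝ, HasDerivAt (fun t : ℝ => g (x + t • v)) (ψ' t) t := by
    intro t
    exact (hg (x + t • v)).comp_hasDerivAt t (hγ t)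
  have hψ'cont : Continuous ψ' := by
    have h1 : Continuous fun t : ℝ => g' (x + t • v) :=
      hcont.comp (by continuity)
    exact h1.clm_apply continuous_const
  have hint : ∀ a b : ℝ, IntervalIntegrable ψ' MeasureTheory.volume a b :=
    fun a b => hψ'cont.intervalIntegrable a b
  have heq : g y - g x = ∫ t in (0:ℝ)..1, ψ' t := by
    have := intervalIntegral.integral_eq_sub_of_hasDerivAt
      (f := fun t : ℝ => g (x + t • v)) (f' := ψ') (a := 0) (b := 1)
      (fun t _ => hder t) (hint 0 1)
    rw [this]; simp [hv]
  have hbound : ∀ t ∈ Set.Icc (0:ℝ) 1, ψ' t ≤ g' x v + L * ‖v‖ ^ 2 * t := by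
    intro t ht
    have h1 : ψ' t - g' x v = (g' (x + t • v) - g' x) v := by simp [ψ']
    have h2 : (g' (x + t • v) - g' x) v ≤ ‖g' (x + t • v) - g' x‖ * ‖v‖ :=
      le_trans (le_abs_self _) ((g' (x + t • v) - g' x).le_opNorm v)
    have h3 : ‖g' (x + t • v) - g' x‖ ≤ L * ‖t • v‖ := by
      simpa using hlip x (x + t • v)
    have h4 : ‖t • v‖ = t * ‖v‖ := by
      rw [norm_smul, Real.norm_eq_abs, abs_of_nonneg ht.1]
    have h5 : ‖g' (x + t • v) - g' x‖ * ‖v‖ ≤ L * (t * ‖v‖) * ‖v‖ := by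
      rw [← h4]; exact mul_le_mul_of_nonneg_right h3 (norm_nonneg v)
    nlinarith [h1, h2, h5]
  have hmono : (∫ t in (0:ℝ)..1, ψ' t) ≤ ∫ t in (0:ℝ)..1, (g' x v + L * ‖v‖ ^ 2 * t) := by
    apply intervalIntegral.integral_mono_on zero_le_one (hint 0 1)
    · exact (Continuous.intervalIntegrable (by continuity) 0 1)
    · exact hbound
  have hval : (∫ t in (0:ℝ)..1, (g' x v + L * ‖v‖ ^ 2 * t)) = g' x v + L / 2 * ‖v‖ ^ 2 := by
    rw [intervalIntegral.integral_add (intervalIntegrable_const)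
      ((show Continuous (fun t : ℝ => L * ‖v‖ ^ 2 * t) from
        continuous_const.mul continuous_id).intervalIntegrable 0 1),
      intervalIntegral.integral_const, intervalIntegral.integral_const_mul,
      integral_id]
    simp; ring
  have hfin : g y - g x ≤ g' x v + L / 2 * ‖v‖ ^ 2 := by
    rw [heq]; exact hmono.trans (le_of_eq hval)
  linarith

/-- If `g` has `L`-Lipschitz derivative and `xmin` is a global minimizer, then
`‖g' x‖² / (2L) ≤ g x - g xmin`. -/
lemma aux_grad_decrease {E : Type*} [NormedAddCommGroup E] [InnerProductSpace ℝ E]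
    [CompleteSpace E]
    (g : E → ℝ) (g' : E → E →L[ℝ] ℝ) (hg : ∀ z, HasFDerivAt g (g' z) z)
    (hcont : Continuous g') (L : ℝ) (hL : 0 < L)
    (hlip : ∀ z w, ‖g' w - g' z‖ ≤ L * ‖w - z‖)
    (xmin : E) (hmin : ∀ y, g xmin ≤ g y) (x : E) :
    ‖g' x‖ ^ 2 / (2 * L) ≤ g x - g xmin := by
  set grad := (InnerProductSpace.toDual ℝ E).symm (g' x) with hgrad
  have hng : ‖grad‖ = ‖g' x‖ := LinearIsometryEquiv.norm_map _ _
  have happ : ∀ w, g' x w = ⟪grad, w⟫ := fun w =>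
    (InnerProductSpace.toDual_symm_apply (𝕜 := ℝ) (E := E)).symm
  set y := x + (-(L⁻¹)) • grad with hy
  have hdesc := aux_descent g g' hg hcont L hlip x y
  have h1 : g' x (y - x) = -(L⁻¹) * ‖g' x‖ ^ 2 := by
    rw [hy]
    have : x + (-(L⁻¹)) • grad - x = (-(L⁻¹)) • grad := by abel
    rw [this, happ, real_inner_smul_right, real_inner_self_eq_norm_sq, hng]
  have h2 : ‖y - x‖ ^ 2 = (L⁻¹ * ‖g' x‖) ^ 2 := by
    rw [hy]
    have : x + (-(L⁻¹)) • grad - x = (-(L⁻¹)) • grad := by abel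
    rw [this, norm_smul, Real.norm_eq_abs, abs_neg, abs_of_nonneg (le_of_lt (inv_pos.2 hL)),
      hng]
  have h3 := hmin y
  rw [h1, h2] at hdesc
  have hL' : L ≠ 0 := ne_of_gt hL
  have e : -(L⁻¹) * ‖g' x‖ ^ 2 + L / 2 * (L⁻¹ * ‖g' x‖) ^ 2 = -(‖g' x‖ ^ 2 / (2 * L)) := by
    field_simp
    ring
  linarith

/-- descent properties of alternating minimization in the smooth
convex Euclidean case: for every `k ≥ 0`,
`H^k - H^{k+1/2} ≥ (1/(2L₁R²)) (H^k - H*)²` and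
`H^{k+1/2} - H^{k+1} ≥ (1/(2L₂R²)) (H^{k+1/2} - H*)²`, where
`H^{k+1/2} = H(x₁^{k+1}, x₂^k)`. Here `g₁ ≡ g₂ ≡ 0`, so `H = f`, and the product
space carries the Euclidean norm `‖(x₁,x₂)‖² = ‖x₁‖² + ‖x₂‖²`. -/
theorem stmt15 {n m : ℕ}
    (f : EuclideanSpace ℝ (Fin n) × EuclideanSpace ℝ (Fin m) → ℝ)
    (hfconv : ConvexOn ℝ Set.univ f)
    (hfdiff : ContDiff ℝ 1 f)
    -- block Lipschitz continuity of the partial gradients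
    (L₁ L₂ : ℝ) (hL₁pos : 0 < L₁) (hL₂pos : 0 < L₂)
    (hlip₁ : ∀ (z : EuclideanSpace ℝ (Fin n) × EuclideanSpace ℝ (Fin m))
        (h₁ : EuclideanSpace ℝ (Fin n)),
      ‖(fderiv ℝ f (z.1 + h₁, z.2)).comp
          (ContinuousLinearMap.inl ℝ (EuclideanSpace ℝ (Fin n)) (EuclideanSpace ℝ (Fin m))) -
        (fderiv ℝ f z).comp
          (ContinuousLinearMap.inl ℝ (EuclideanSpace ℝ (Fin n)) (EuclideanSpace ℝ (Fin m)))‖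
        ≤ L₁ * ‖h₁‖)
    (hlip₂ : ∀ (z : EuclideanSpace ℝ (Fin n) × EuclideanSpace ℝ (Fin m))
        (h₂ : EuclideanSpace ℝ (Fin m)),
      ‖(fderiv ℝ f (z.1, z.2 + h₂)).comp
          (ContinuousLinearMap.inr ℝ (EuclideanSpace ℝ (Fin n)) (EuclideanSpace ℝ (Fin m))) -
        (fderiv ℝ f z).comp
          (ContinuousLinearMap.inr ℝ (EuclideanSpace ℝ (Fin n)) (EuclideanSpace ℝ (Fin m)))‖
        ≤ L₂ * ‖h₂‖)
    -- nonempty set of minimizers, with minimal value H*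
    (Hstar : ℝ) (hHstarle : ∀ z, Hstar ≤ f z) (hHstarex : ∃ z, f z = Hstar)
    -- the alternating minimization sequence
    (x : ℕ → EuclideanSpace ℝ (Fin n) × EuclideanSpace ℝ (Fin m))
    (hinit : ∀ y₂, f (x 0) ≤ f ((x 0).1, y₂))
    (hstep1 : ∀ (k : ℕ) y₁, f ((x (k + 1)).1, (x k).2) ≤ f (y₁, (x k).2))
    (hstep2 : ∀ (k : ℕ) y₂, f (x (k + 1)) ≤ f ((x (k + 1)).1, y₂))
    -- compactness of the level set of H at x⁰ and its (Euclidean) diameter R relative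
    -- to the set of minimizers
    (hcomp : IsCompact {z : EuclideanSpace ℝ (Fin n) × EuclideanSpace ℝ (Fin m) |
      f z ≤ f (x 0)})
    (R : ℝ) (hRpos : 0 < R)
    (hR : ∀ z, f z ≤ f (x 0) → ∀ y, f y = Hstar →
      ‖z.1 - y.1‖ ^ 2 + ‖z.2 - y.2‖ ^ 2 ≤ R ^ 2) :
    ∀ k : ℕ,
      1 / (2 * L₁ * R ^ 2) * (f (x k) - Hstar) ^ 2 ≤
        f (x k) - f ((x (k + 1)).1, (x k).2) ∧
      1 / (2 * L₂ * R ^ 2) * (f ((x (k + 1)).1, (x k).2) - Hstar) ^ 2 ≤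
        f ((x (k + 1)).1, (x k).2) - f (x (k + 1)) := by
  
  obtain ⟨xs, hxs⟩ := hHstarex
  have hdf : Differentiable ℝ f := hfdiff.differentiable one_ne_zero
  have hcontF : Continuous (fderiv ℝ f) := hfdiff.continuous_fderiv one_ne_zero
  set F := fderiv ℝ f with hF
  -- block derivatives
  have hg1 : ∀ (c : EuclideanSpace ℝ (Fin m)) (y₁ : EuclideanSpace ℝ (Fin n)),
      HasFDerivAt (fun y₁ => f (y₁, c)) ((F (y₁, c)).comp (ContinuousLinearMap.inl ℝ (EuclideanSpace ℝ (Fin n)) (EuclideanSpace ℝ (Fin m)))) y₁ :=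
    fun c y₁ => ((hdf (y₁, c)).hasFDerivAt).comp y₁ (hasFDerivAt_prodMk_left y₁ c)
  have hg2 : ∀ (c : EuclideanSpace ℝ (Fin n)) (y₂ : EuclideanSpace ℝ (Fin m)),
      HasFDerivAt (fun y₂ => f (c, y₂)) ((F (c, y₂)).comp (ContinuousLinearMap.inr ℝ (EuclideanSpace ℝ (Fin n)) (EuclideanSpace ℝ (Fin m)))) y₂ :=
    fun c y₂ => ((hdf (c, y₂)).hasFDerivAt).comp y₂ (hasFDerivAt_prodMk_right c y₂)
  have hcont1 : ∀ c : EuclideanSpace ℝ (Fin m),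
      Continuous (fun y₁ => (F (y₁, c)).comp (ContinuousLinearMap.inl ℝ (EuclideanSpace ℝ (Fin n)) (EuclideanSpace ℝ (Fin m)))) := by
    intro c
    exact (hcontF.comp (continuous_id.prodMk continuous_const)).clm_comp continuous_const
  have hcont2 : ∀ c : EuclideanSpace ℝ (Fin n),
      Continuous (fun y₂ => (F (c, y₂)).comp (ContinuousLinearMap.inr ℝ (EuclideanSpace ℝ (Fin n)) (EuclideanSpace ℝ (Fin m)))) := by
    intro c
    exact (hcontF.comp (continuous_const.prodMk continuous_id)).clm_comp continuous_const
  have hlipg1 : ∀ (c : EuclideanSpace ℝ (Fin m)) (z w : EuclideanSpace ℝ (Fin n)),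
      ‖(F (w, c)).comp (ContinuousLinearMap.inl ℝ (EuclideanSpace ℝ (Fin n)) (EuclideanSpace ℝ (Fin m))) -
        (F (z, c)).comp (ContinuousLinearMap.inl ℝ (EuclideanSpace ℝ (Fin n)) (EuclideanSpace ℝ (Fin m)))‖ ≤ L₁ * ‖w - z‖ := by
    intro c z w
    have := hlip₁ (z, c) (w - z)
    simpa using this
  have hlipg2 : ∀ (c : EuclideanSpace ℝ (Fin n)) (z w : EuclideanSpace ℝ (Fin m)),
      ‖(F (c, w)).comp (ContinuousLinearMap.inr ℝ (EuclideanSpace ℝ (Fin n)) (EuclideanSpace ℝ (Fin m))) -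
        (F (c, z)).comp (ContinuousLinearMap.inr ℝ (EuclideanSpace ℝ (Fin n)) (EuclideanSpace ℝ (Fin m)))‖ ≤ L₂ * ‖w - z‖ := by
    intro c z w
    have := hlip₂ (c, z) (w - z)
    simpa using this
  -- decomposition of the full derivative
  have hdecomp : ∀ (z : EuclideanSpace ℝ (Fin n) × EuclideanSpace ℝ (Fin m)) (u : EuclideanSpace ℝ (Fin n) × EuclideanSpace ℝ (Fin m)),
      F z u = (F z).comp (ContinuousLinearMap.inl ℝ (EuclideanSpace ℝ (Fin n)) (EuclideanSpace ℝ (Fin m))) u.1 +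
        (F z).comp (ContinuousLinearMap.inr ℝ (EuclideanSpace ℝ (Fin n)) (EuclideanSpace ℝ (Fin m))) u.2 := by
    intro z u
    have hu : u = (ContinuousLinearMap.inl ℝ (EuclideanSpace ℝ (Fin n)) (EuclideanSpace ℝ (Fin m))) u.1 +
        (ContinuousLinearMap.inr ℝ (EuclideanSpace ℝ (Fin n)) (EuclideanSpace ℝ (Fin m))) u.2 := by
      simp [Prod.ext_iff]
    rw [ContinuousLinearMap.comp_apply, ContinuousLinearMap.comp_apply, ← map_add, ← hu]
  -- monotone decrease
  have hmono : ∀ k : ℕ, f (x (k + 1)) ≤ f ((x (k + 1)).1, (x k).2) ∧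
      f ((x (k + 1)).1, (x k).2) ≤ f (x k) := by
    intro k
    refine ⟨hstep2 k (x k).2, ?_⟩
    have := hstep1 k (x k).1
    simpa using this
  have hlevel : ∀ k : ℕ, f (x k) ≤ f (x 0) := by
    intro k
    induction k with
    | zero => exact le_refl _
    | succ j ih => exact le_trans (le_trans (hmono j).1 (hmono j).2) ih
  -- partial gradient zero in the second block at x k
  have hD2zero : ∀ k : ℕ, (F (x k)).comp (ContinuousLinearMap.inr ℝ (EuclideanSpace ℝ (Fin n)) (EuclideanSpace ℝ (Fin m))) = 0 := by
    intro k
    have hmin : ∀ y₂ : EuclideanSpace ℝ (Fin m), f ((x k).1, (x k).2) ≤ f ((x k).1, y₂) := by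
      cases k with
      | zero => intro y₂; simpa using hinit y₂
      | succ j => intro y₂; simpa using hstep2 j y₂
    have hloc : IsLocalMin (fun y₂ => f ((x k).1, y₂)) ((x k).2) :=
      Filter.Eventually.of_forall hmin
    have hder := hg2 (x k).1 (x k).2
    have := hloc.hasFDerivAt_eq_zero hder
    simpa using this
  -- norm of first block difference to minimizer bounded by R
  have hnorm1 : ∀ z : EuclideanSpace ℝ (Fin n) × EuclideanSpace ℝ (Fin m), f z ≤ f (x 0) → ‖z.1 - xs.1‖ ≤ R := by
    intro z hz
    have := hR z hz xs hxs
    nlinarith [sq_nonneg ‖z.2 - xs.2‖, norm_nonneg (z.1 - xs.1), hRpos]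
  have hnorm2 : ∀ z : EuclideanSpace ℝ (Fin n) × EuclideanSpace ℝ (Fin m), f z ≤ f (x 0) → ‖z.2 - xs.2‖ ≤ R := by
    intro z hz
    have := hR z hz xs hxs
    nlinarith [sq_nonneg ‖z.1 - xs.1‖, norm_nonneg (z.2 - xs.2), hRpos]
  intro k
  constructor
  · -- first half-step
    set c := (x k).2
    set D₁ := (F ((x k).1, c)).comp (ContinuousLinearMap.inl ℝ (EuclideanSpace ℝ (Fin n)) (EuclideanSpace ℝ (Fin m))) with hD₁
    have hxk : ((x k).1, c) = x k := by simp [c]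
    -- gradient decrease for the first block
    have hdec := aux_grad_decrease (fun y₁ => f (y₁, c))
      (fun y₁ => (F (y₁, c)).comp (ContinuousLinearMap.inl ℝ (EuclideanSpace ℝ (Fin n)) (EuclideanSpace ℝ (Fin m))))
      (hg1 c) (hcont1 c) L₁ hL₁pos (hlipg1 c) ((x (k+1)).1) (hstep1 k) ((x k).1)
    -- convexity bound
    have hconv := aux_convex_lb f hfconv (x k) (hdf (x k)).hasFDerivAt xs
    -- f (x k) - Hstar ≤ F (x k) (x k - xs)
    have h1 : f (x k) - Hstar ≤ F (x k) (x k - xs) := by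
      have hFneg : F (x k) (xs - x k) = - F (x k) (x k - xs) := by
        rw [← map_neg]; congr 1; abel
      rw [hxs] at hconv
      rw [hF] at hFneg
      linarith [hconv, hFneg ▸ hconv]
    have h2 : F (x k) (x k - xs) = D₁ ((x k).1 - xs.1) := by
      rw [hdecomp (x k) (x k - xs), hD2zero k]
      simp [hD₁, hxk]
    have h3 : D₁ ((x k).1 - xs.1) ≤ ‖D₁‖ * R := by
      calc D₁ ((x k).1 - xs.1) ≤ ‖D₁‖ * ‖(x k).1 - xs.1‖ :=
            le_trans (le_abs_self _) (D₁.le_opNorm _)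
        _ ≤ ‖D₁‖ * R := by
            exact mul_le_mul_of_nonneg_left (hnorm1 (x k) (hlevel k)) (norm_nonneg _)
    have hgap : f (x k) - Hstar ≤ ‖D₁‖ * R := by
      rw [h2] at h1; linarith
    have hge : 0 ≤ f (x k) - Hstar := by linarith [hHstarle (x k)]
    have hdec' : ‖D₁‖ ^ 2 / (2 * L₁) ≤ f (x k) - f ((x (k+1)).1, c) := by
      have : f ((x k).1, c) = f (x k) := by rw [hxk]
      rw [← this]
      exact hdec
    have hsq : (f (x k) - Hstar) ^ 2 ≤ ‖D₁‖ ^ 2 * R ^ 2 := by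
      have h := pow_le_pow_left₀ hge hgap 2
      rwa [mul_pow] at h
    have key : 1 / (2 * L₁ * R ^ 2) * (f (x k) - Hstar) ^ 2 ≤ ‖D₁‖ ^ 2 / (2 * L₁) := by
      rw [one_div, div_eq_mul_inv]
      have hpos : (0:ℝ) < 2 * L₁ * R ^ 2 := by positivity
      calc (2 * L₁ * R ^ 2)⁻¹ * (f (x k) - Hstar) ^ 2
          ≤ (2 * L₁ * R ^ 2)⁻¹ * (‖D₁‖ ^ 2 * R ^ 2) :=
            mul_le_mul_of_nonneg_left hsq (by positivity)
        _ = ‖D₁‖ ^ 2 * (2 * L₁)⁻¹ := by field_simp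
    linarith
  · -- second half-step
    set w : EuclideanSpace ℝ (Fin n) × EuclideanSpace ℝ (Fin m) := ((x (k+1)).1, (x k).2) with hw
    set D₂ := (F w).comp (ContinuousLinearMap.inr ℝ (EuclideanSpace ℝ (Fin n)) (EuclideanSpace ℝ (Fin m))) with hD₂
    have hflevel : f w ≤ f (x 0) := le_trans (hmono k).2 (hlevel k)
    -- partial gradient zero in the first block at w
    have hD1zero : (F w).comp (ContinuousLinearMap.inl ℝ (EuclideanSpace ℝ (Fin n)) (EuclideanSpace ℝ (Fin m))) = 0 := by
      have hloc : IsLocalMin (fun y₁ => f (y₁, (x k).2)) ((x (k+1)).1) :=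
        Filter.Eventually.of_forall (hstep1 k)
      have hder := hg1 (x k).2 (x (k+1)).1
      exact hloc.hasFDerivAt_eq_zero hder
    have hdec := aux_grad_decrease (fun y₂ => f ((x (k+1)).1, y₂))
      (fun y₂ => (F ((x (k+1)).1, y₂)).comp (ContinuousLinearMap.inr ℝ (EuclideanSpace ℝ (Fin n)) (EuclideanSpace ℝ (Fin m))))
      (hg2 (x (k+1)).1) (hcont2 (x (k+1)).1) L₂ hL₂pos (hlipg2 (x (k+1)).1)
      ((x (k+1)).2) (fun y₂ => by simpa using hstep2 k y₂) ((x k).2)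
    have hdec' : ‖D₂‖ ^ 2 / (2 * L₂) ≤ f w - f (x (k+1)) := by
      have he : f ((x (k+1)).1, (x (k+1)).2) = f (x (k+1)) := by simp
      rw [he] at hdec
      exact hdec
    have hconv := aux_convex_lb f hfconv w (hdf w).hasFDerivAt xs
    have h1 : f w - Hstar ≤ F w (w - xs) := by
      have hFneg : F w (xs - w) = - F w (w - xs) := by
        rw [← map_neg]; congr 1; abel
      rw [hxs] at hconv
      linarith [hFneg ▸ hconv]
    have h2 : F w (w - xs) = D₂ (w.2 - xs.2) := by
      rw [hdecomp w (w - xs), hD1zero]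
      simp [hD₂]
    have h3 : D₂ (w.2 - xs.2) ≤ ‖D₂‖ * R := by
      calc D₂ (w.2 - xs.2) ≤ ‖D₂‖ * ‖w.2 - xs.2‖ :=
            le_trans (le_abs_self _) (D₂.le_opNorm _)
        _ ≤ ‖D₂‖ * R := mul_le_mul_of_nonneg_left (hnorm2 w hflevel) (norm_nonneg _)
    have hgap : f w - Hstar ≤ ‖D₂‖ * R := by rw [h2] at h1; linarith
    have hge : 0 ≤ f w - Hstar := by linarith [hHstarle w]
    have hsq : (f w - Hstar) ^ 2 ≤ ‖D₂‖ ^ 2 * R ^ 2 := by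
      have h := pow_le_pow_left₀ hge hgap 2
      rwa [mul_pow] at h
    have key : 1 / (2 * L₂ * R ^ 2) * (f w - Hstar) ^ 2 ≤ ‖D₂‖ ^ 2 / (2 * L₂) := by
      rw [one_div, div_eq_mul_inv]
      calc (2 * L₂ * R ^ 2)⁻¹ * (f w - Hstar) ^ 2
          ≤ (2 * L₂ * R ^ 2)⁻¹ * (‖D₂‖ ^ 2 * R ^ 2) :=
            mul_le_mul_of_nonneg_left hsq (by positivity)
        _ = ‖D₂‖ ^ 2 * (2 * L₂)⁻¹ := by field_simp
    linarith
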